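/- Let F be a c.d.f. with continuous density f on the interior of its convex support, such that (1−F)/f is non-increasing there. Fix p₁ < p₂ (reals in the interior of domain where F(pᵢ − x) < 1). Then the function x ↦ (1 − F(p₁ − x))/(1 − F(p₂ − x)) is non-increasing in x on the set where both numerator and denominator are positive and both p₁−x, p₂−x lie in the interior of the support of f. -/

import Mathlib

open Set

lemma haz_deriv_aux (F f : ℝ → ℝ) (p x : ℝ) (hF : HasDerivAt F (f (p - x)) (p - x)) :
    HasDerivAt (fun y => 1 - F (p - y)) (f (p - x)) x := by
  have h1 : HasDerivAt (fun y : ℝ => p - y) (-1) x := (hasDerivAt_id x).const_sub p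
  have h2 : HasDerivAt (fun y => F (p - y)) (f (p - x) * (-1)) x := hF.comp x h1
  have h3 := h2.const_sub 1
  exact h3.congr_deriv (by ring)

/-- Under the monotone hazard-type condition `(1−F)/f` non-increasing on the interior
`(l,u)` of the support, and `p₁ < p₂`, the ratio `x ↦ (1 − F(p₁ − x))/(1 − F(p₂ − x))` is
non-increasing in `x` (on the region where both arguments lie in `(l,u)` and the denominator
is positive). -/
theorem hazard_ratio_monotone (l u : ℝ) (F f : ℝ → ℝ) (p₁ p₂ : ℝ)
    (hf_cont : ContinuousOn f (Ioo l u)) (hf_pos : ∀ t ∈ Ioo l u, 0 < f t)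
    (hF : ∀ t ∈ Ioo l u, HasDerivAt F (f t) t)
    (hhaz : ∀ s ∈ Ioo l u, ∀ t ∈ Ioo l u, s ≤ t → (1 - F t) / f t ≤ (1 - F s) / f s)
    (hp : p₁ < p₂)
    (x₁ x₂ : ℝ) (hx : x₁ ≤ x₂)
    (hdom : ∀ x ∈ Icc x₁ x₂, p₁ - x ∈ Ioo l u ∧ p₂ - x ∈ Ioo l u ∧ F (p₂ - x) < 1) :
    (1 - F (p₁ - x₂)) / (1 - F (p₂ - x₂)) ≤ (1 - F (p₁ - x₁)) / (1 - F (p₂ - x₁)) := by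
  set G : ℝ → ℝ := fun x => (1 - F (p₁ - x)) / (1 - F (p₂ - x)) with hG
  -- derivative of G at each point of Icc x₁ x₂
  have hderiv : ∀ x ∈ Icc x₁ x₂, HasDerivAt G
      ((f (p₁ - x) * (1 - F (p₂ - x)) - (1 - F (p₁ - x)) * f (p₂ - x)) /
        (1 - F (p₂ - x)) ^ 2) x := by
    intro x hxm
    obtain ⟨h1, h2, h3⟩ := hdom x hxm
    have hN := haz_deriv_aux F f p₁ x (hF _ h1)
    have hD := haz_deriv_aux F f p₂ x (hF _ h2)
    exact hN.div hD (by linarith)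
  have hderiv_nonpos : ∀ x ∈ Icc x₁ x₂,
      (f (p₁ - x) * (1 - F (p₂ - x)) - (1 - F (p₁ - x)) * f (p₂ - x)) /
        (1 - F (p₂ - x)) ^ 2 ≤ 0 := by
    intro x hxm
    obtain ⟨h1, h2, h3⟩ := hdom x hxm
    have hle : (1 - F (p₂ - x)) / f (p₂ - x) ≤ (1 - F (p₁ - x)) / f (p₁ - x) :=
      hhaz _ h1 _ h2 (by linarith)
    have hf1 := hf_pos _ h1
    have hf2 := hf_pos _ h2
    rw [div_le_div_iff₀ hf2 hf1] at hle
    apply div_nonpos_of_nonpos_of_nonneg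
    · nlinarith
    · positivity
  have hanti : AntitoneOn G (Icc x₁ x₂) := by
    apply antitoneOn_of_deriv_nonpos (convex_Icc x₁ x₂)
    · exact fun x hxm => ((hderiv x hxm).continuousAt).continuousWithinAt
    · intro x hxm
      rw [interior_Icc] at hxm
      exact ((hderiv x (Ioo_subset_Icc_self hxm)).differentiableAt).differentiableWithinAt
    · intro x hxm
      rw [interior_Icc] at hxm
      rw [(hderiv x (Ioo_subset_Icc_self hxm)).deriv]
      exact hderiv_nonpos x (Ioo_subset_Icc_self hxm)
  exact hanti (left_mem_Icc.2 hx) (right_mem_Icc.2 hx) hx
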